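/- Let m < 0 and let u, g, Ψ be real numbers with 0 < u < g. Suppose that for every p > 0 one has (u^{m(p+1)} − g^{m(p+1)})/(p+1) ≤ ((u^{mp} − g^{mp})/p) · Ψ and additionally Ψ ≤ u^m. Then Ψ = u^m. -/

import Mathlib

/-- Identification of the boundary flux: if 0 < u < g, m < 0, Ψ ≤ u^m, and for every
p > 0 one has (u^{m(p+1)} − g^{m(p+1)})/(p+1) ≤ ((u^{mp} − g^{mp})/p)·Ψ, then Ψ = u^m. -/
theorem stmt6 (m u g Ψ : ℝ) (hm : m < 0) (hu : 0 < u) (hug : u < g)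
    (h : ∀ p : ℝ, 0 < p →
      (u ^ (m * (p + 1)) - g ^ (m * (p + 1))) / (p + 1) ≤
        (u ^ (m * p) - g ^ (m * p)) / p * Ψ)
    (hΨ : Ψ ≤ u ^ m) : Ψ = u ^ m := by
  have hg : 0 < g := hu.trans hug
  set r : ℝ := (g / u) ^ m with hr_def
  have hgu : 1 < g / u := (one_lt_div hu).2 hug
  have hr0 : 0 < r := Real.rpow_pos_of_pos (div_pos hg hu) m
  have hr1 : r < 1 := Real.rpow_lt_one_of_one_lt_of_neg hgu hm
  -- key inequality after dividing by u^(m*p)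
  have key : ∀ p : ℝ, 0 < p →
      p / (p + 1) * ((u ^ m - r ^ p * g ^ m) / (1 - r ^ p)) ≤ Ψ := by
    intro p hp
    have hrp1 : r ^ p < 1 := Real.rpow_lt_one hr0.le hr1 hp
    have h1 : 0 < 1 - r ^ p := by linarith
    have hup : (0:ℝ) < u ^ (m * p) := Real.rpow_pos_of_pos hu _
    have hrp : r ^ p = (g / u) ^ (m * p) := by
      rw [hr_def, ← Real.rpow_mul (div_pos hg hu).le]
    have e2 : g ^ (m * p) = u ^ (m * p) * r ^ p := by
      rw [hrp, ← Real.mul_rpow hu.le (div_pos hg hu).le,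
        mul_div_cancel₀ _ (ne_of_gt hu)]
    have e1 : u ^ (m * (p + 1)) = u ^ (m * p) * u ^ m := by
      rw [mul_add, mul_one, Real.rpow_add hu]
    have e3 : g ^ (m * (p + 1)) = u ^ (m * p) * (r ^ p * g ^ m) := by
      rw [mul_add, mul_one, Real.rpow_add hg, e2, mul_assoc]
    have hle := h p hp
    rw [e1, e2, e3, div_mul_eq_mul_div,
      div_le_div_iff₀ (by linarith) hp] at hle
    -- hle : u^(m*p) * (u^m - r^p * g^m) * p ≤ u^(m*p) * (1 - r^p) * Ψ * (p+1)
    have hle2 : (u ^ m - r ^ p * g ^ m) * p ≤ (1 - r ^ p) * Ψ * (p + 1) := by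
      refine le_of_mul_le_mul_left ?_ hup
      calc u ^ (m * p) * ((u ^ m - r ^ p * g ^ m) * p)
          = (u ^ (m * p) * u ^ m - u ^ (m * p) * (r ^ p * g ^ m)) * p := by ring
        _ ≤ (u ^ (m * p) - u ^ (m * p) * r ^ p) * Ψ * (p + 1) := hle
        _ = u ^ (m * p) * ((1 - r ^ p) * Ψ * (p + 1)) := by ring
    rw [div_mul_div_comm, div_le_iff₀ (by positivity)]
    calc p * (u ^ m - r ^ p * g ^ m) = (u ^ m - r ^ p * g ^ m) * p := by ring
      _ ≤ (1 - r ^ p) * Ψ * (p + 1) := hle2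
      _ = Ψ * ((p + 1) * (1 - r ^ p)) := by ring
  -- the limit of the left-hand side as p → ∞ is u^m
  have ht : Filter.Tendsto (fun p : ℝ => r ^ p) Filter.atTop (nhds 0) :=
    tendsto_rpow_atTop_of_base_lt_one r (by linarith) hr1
  have ht2 : Filter.Tendsto (fun p : ℝ => p / (p + 1)) Filter.atTop (nhds 1) := by
    have h0 : Filter.Tendsto (fun p : ℝ => (p + 1)⁻¹) Filter.atTop (nhds 0) :=
      (Filter.tendsto_atTop_add_const_right _ 1 Filter.tendsto_id).inv_tendsto_atTop
    have := (tendsto_const_nhds (x := (1:ℝ)) (f := Filter.atTop)).sub h0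
    rw [sub_zero] at this
    refine this.congr' ?_
    filter_upwards [Filter.eventually_gt_atTop (0:ℝ)] with p hp
    field_simp
    ring
  have htf : Filter.Tendsto
      (fun p : ℝ => p / (p + 1) * ((u ^ m - r ^ p * g ^ m) / (1 - r ^ p)))
      Filter.atTop (nhds (u ^ m)) := by
    have : Filter.Tendsto
        (fun p : ℝ => (u ^ m - r ^ p * g ^ m) / (1 - r ^ p))
        Filter.atTop (nhds ((u ^ m - 0 * g ^ m) / (1 - 0))) :=
      (tendsto_const_nhds.sub (ht.mul tendsto_const_nhds)).div
        (tendsto_const_nhds.sub ht) (by norm_num)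
    simpa using ht2.mul this
  have hle : u ^ m ≤ Ψ := by
    refine le_of_tendsto htf ?_
    filter_upwards [Filter.eventually_gt_atTop (0:ℝ)] with p hp using key p hp
  linarith
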